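/- In H³, if Λ·Λ = 0 (the scalar part of the square of the bivector Λ vanishes) then the axes of Λ are given by Λ₁,₂ = ½(1 ± I)Λ; moreover 1 + I and 1 - I are invertible with (1 ± I)⁻¹ = ½(1 ∓ I), since I² = -1. -/
import Mathlib


/-- In `H³`, if the scalar part `Λ·Λ` of the square of the bivector `Λ`
vanishes, then the axes of `Λ` are `Λ₁,₂ = ½(1 ± I)Λ`: they are simple (their
squares are purely scalar, namely `±(p₁₀p₂₃+p₂₀p₃₁+p₃₀p₁₂)`), they commute
and sum to `Λ`; moreover `I² = -1`, so `1 + I` and `1 - I` are invertible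
with `(1 ± I)⁻¹ = ½(1 ∓ I)`. -/
theorem stmt_17 {A : Type*} [Ring A] [Algebra ℝ A] (e0 e1 e2 e3 : A)
    (h00 : e0 * e0 = -1) (h11 : e1 * e1 = 1) (h22 : e2 * e2 = 1)
    (h33 : e3 * e3 = 1)
    (h01 : e0 * e1 = -(e1 * e0)) (h02 : e0 * e2 = -(e2 * e0))
    (h03 : e0 * e3 = -(e3 * e0)) (h12 : e1 * e2 = -(e2 * e1))
    (h13 : e1 * e3 = -(e3 * e1)) (h23 : e2 * e3 = -(e3 * e2))
    (p10 p20 p30 p23 p31 p12 : ℝ)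
    (hdot : p10 ^ 2 + p20 ^ 2 + p30 ^ 2 - p23 ^ 2 - p31 ^ 2 - p12 ^ 2 = 0)
    (I Λ L1 L2 : A)
    (hI : I = e0 * e1 * e2 * e3)
    (hΛ : Λ = p10 • (e1 * e0) + p20 • (e2 * e0) + p30 • (e3 * e0) +
        p23 • (e2 * e3) + p31 • (e3 * e1) + p12 • (e1 * e2))
    (hL1 : L1 = (1 / 2 : ℝ) • ((1 + I) * Λ))
    (hL2 : L2 = (1 / 2 : ℝ) • ((1 - I) * Λ)) :
    I * I = -1 ∧
    (1 + I) * ((1 / 2 : ℝ) • (1 - I)) = 1 ∧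
    ((1 / 2 : ℝ) • (1 - I)) * (1 + I) = 1 ∧
    (1 - I) * ((1 / 2 : ℝ) • (1 + I)) = 1 ∧
    ((1 / 2 : ℝ) • (1 + I)) * (1 - I) = 1 ∧
    L1 + L2 = Λ ∧
    L1 * L2 = L2 * L1 ∧
    L1 * L1 = algebraMap ℝ A (p10 * p23 + p20 * p31 + p30 * p12) ∧
    L2 * L2 = algebraMap ℝ A (-(p10 * p23 + p20 * p31 + p30 * p12)) := by
  have t10 : e1 * e0 = -(e0 * e1) := by rw [h01, neg_neg]
  have t20 : e2 * e0 = -(e0 * e2) := by rw [h02, neg_neg]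
  have t30 : e3 * e0 = -(e0 * e3) := by rw [h03, neg_neg]
  have t21 : e2 * e1 = -(e1 * e2) := by rw [h12, neg_neg]
  have t31 : e3 * e1 = -(e1 * e3) := by rw [h13, neg_neg]
  have t32 : e3 * e2 = -(e2 * e3) := by rw [h23, neg_neg]
  have s10 : ∀ x : A, e1 * (e0 * x) = -(e0 * (e1 * x)) := fun x => by
    rw [← mul_assoc, t10, neg_mul, mul_assoc]
  have s20 : ∀ x : A, e2 * (e0 * x) = -(e0 * (e2 * x)) := fun x => by
    rw [← mul_assoc, t20, neg_mul, mul_assoc]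
  have s30 : ∀ x : A, e3 * (e0 * x) = -(e0 * (e3 * x)) := fun x => by
    rw [← mul_assoc, t30, neg_mul, mul_assoc]
  have s21 : ∀ x : A, e2 * (e1 * x) = -(e1 * (e2 * x)) := fun x => by
    rw [← mul_assoc, t21, neg_mul, mul_assoc]
  have s31 : ∀ x : A, e3 * (e1 * x) = -(e1 * (e3 * x)) := fun x => by
    rw [← mul_assoc, t31, neg_mul, mul_assoc]
  have s32 : ∀ x : A, e3 * (e2 * x) = -(e2 * (e3 * x)) := fun x => by
    rw [← mul_assoc, t32, neg_mul, mul_assoc]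
  have q0 : ∀ x : A, e0 * (e0 * x) = -x := fun x => by
    rw [← mul_assoc, h00, neg_one_mul]
  have q1 : ∀ x : A, e1 * (e1 * x) = x := fun x => by
    rw [← mul_assoc, h11, one_mul]
  have q2 : ∀ x : A, e2 * (e2 * x) = x := fun x => by
    rw [← mul_assoc, h22, one_mul]
  have q3 : ∀ x : A, e3 * (e3 * x) = x := fun x => by
    rw [← mul_assoc, h33, one_mul]
  have hII : I * I = -1 := by
    rw [hI]
    simp only [mul_assoc, s10, s20, s30, s21, s31, s32, q0, q1, q2, q3,
      h00, h11, h22, h33, mul_neg, neg_neg, mul_one]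
  have hcomm : Λ * I = I * Λ := by
    rw [hI, hΛ]
    simp only [mul_assoc, mul_add, add_mul, mul_neg, neg_mul, smul_mul_assoc,
      mul_smul_comm, smul_smul, s10, s20, s30, s21, s31, s32, q0, q1, q2, q3,
      t10, t20, t30, t21, t31, t32,
      h00, h11, h22, h33, mul_one, one_mul, neg_neg, smul_neg, neg_smul]
    try module
  have hΛ2 : Λ * Λ = (-(2*(p10 * p23 + p20 * p31 + p30 * p12))) • I := by
    rw [hI, hΛ]
    simp only [mul_assoc, mul_add, add_mul, mul_neg, neg_mul, smul_mul_assoc,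
      mul_smul_comm, smul_smul, s10, s20, s30, s21, s31, s32, q0, q1, q2, q3,
      t10, t20, t30, t21, t31, t32,
      h00, h11, h22, h33, mul_one, one_mul, neg_neg, smul_neg, neg_smul]
    try match_scalars <;>
      first
        | ring1
        | linear_combination hdot
        | linear_combination -hdot
        | linear_combination ((1:ℝ)/2) * hdot
        | linear_combination (-(1:ℝ)/2) * hdot
  have quart : ∀ a b : A, ((1/2:ℝ) • a) * ((1/2:ℝ) • b) = (1/4:ℝ) • (a * b) := by
    intro a b
    rw [smul_mul_assoc, mul_smul_comm, smul_smul]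
    norm_num
  have swapP : Λ * ((1 + I) * Λ) = (1 + I) * (Λ * Λ) := by
    simp only [add_mul, one_mul, mul_add]
    rw [← mul_assoc, hcomm, mul_assoc]
  have swapM : Λ * ((1 - I) * Λ) = (1 - I) * (Λ * Λ) := by
    simp only [sub_mul, one_mul, mul_sub]
    rw [← mul_assoc, hcomm, mul_assoc]
  have hPM : (1 + I) * (1 - I) = (1:A) + 1 := by
    rw [mul_sub, mul_one, add_mul, one_mul, hII]
    abel
  have hMP : (1 - I) * (1 + I) = (1:A) + 1 := by
    rw [mul_add, mul_one, sub_mul, one_mul, hII]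
    abel
  have hPP : (1 + I) * (1 + I) = I + I := by
    rw [mul_add, mul_one, add_mul, one_mul, hII]
    abel
  have hMM : (1 - I) * (1 - I) = -(I + I) := by
    rw [mul_sub, mul_one, sub_mul, one_mul, hII]
    abel
  refine ⟨hII, ?_, ?_, ?_, ?_, ?_, ?_, ?_, ?_⟩
  · rw [mul_smul_comm, hPM]; module
  · rw [smul_mul_assoc, hMP]; module
  · rw [mul_smul_comm, hMP]; module
  · rw [smul_mul_assoc, hPM]; module
  · rw [hL1, hL2, ← smul_add, ← add_mul]
    have h2 : (1 + I) + (1 - I) = (1:A) + 1 := by abel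
    rw [h2, add_mul, one_mul, smul_add, ← add_smul]
    norm_num
  · rw [hL1, hL2, quart, quart, mul_assoc, swapM, mul_assoc, swapP,
      show (1+I)*((1-I)*(Λ*Λ)) = ((1+I)*(1-I))*(Λ*Λ) from (mul_assoc _ _ _).symm,
      show (1-I)*((1+I)*(Λ*Λ)) = ((1-I)*(1+I))*(Λ*Λ) from (mul_assoc _ _ _).symm,
      hPM, hMP]
  · rw [hL1, quart, mul_assoc, swapP, ← mul_assoc, hPP, hΛ2,
      Algebra.algebraMap_eq_smul_one, mul_smul_comm, add_mul, hII, smul_smul]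
    match_scalars
    ring1
  · rw [hL2, quart, mul_assoc, swapM, ← mul_assoc, hMM, hΛ2,
      Algebra.algebraMap_eq_smul_one, mul_smul_comm, neg_mul, add_mul, hII, smul_smul]
    match_scalars
    ring1
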